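/- Let n be a natural number and let s be a nonzero vector in Fin (n+1) → ZMod 2. Then the number of functions f : (Fin (n+1) → ZMod 2) → (Fin n → ZMod 2) that are 2-to-1 and satisfy f(x + s) = f(x) for all x is exactly (2^n)!, i.e., Nat.card {f // f is 2-to-1 ∧ ∀ x, f (x + s) = f x} = (2^n)! . -/

import Mathlib

/-- For a fixed nonzero mask `s`, there are exactly `(2^n)!` 2-to-1 Simon
functions with mask `s`. -/
theorem card_simon_functions_fixed_mask (n : ℕ)
    (s : Fin (n + 1) → ZMod 2) (hs : s ≠ 0) :
    Nat.card {f : (Fin (n + 1) → ZMod 2) → (Fin n → ZMod 2) //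
        (∀ y ∈ Set.range f, Nat.card (f ⁻¹' {y}) = 2) ∧ ∀ x, f (x + s) = f x}
      = Nat.factorial (2 ^ n) := by
  classical
  set p : Submodule (ZMod 2) (Fin (n + 1) → ZMod 2) := Submodule.span (ZMod 2) {s} with hp
  have hxs : ∀ x : Fin (n + 1) → ZMod 2, x + s ≠ x := by
    intro x h
    apply hs
    have := congrArg (fun z => z - x) h
    simpa using this
  have hmk : ∀ a b : Fin (n + 1) → ZMod 2,
      (Submodule.Quotient.mk a : (Fin (n + 1) → ZMod 2) ⧸ p) = Submodule.Quotient.mk b ↔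
        (a = b ∨ a = b + s) := by
    intro a b
    rw [Submodule.Quotient.eq, hp, Submodule.mem_span_singleton]
    constructor
    · rintro ⟨c, hc⟩
      fin_cases c
      · left
        have : a - b = 0 := by rw [← hc]; exact zero_smul _ s
        exact sub_eq_zero.mp this
      · right
        have : a - b = s := by rw [← hc]; exact one_smul _ s
        rw [sub_eq_iff_eq_add] at this
        exact this.trans (add_comm s b)
    · rintro (rfl | rfl)
      · exact ⟨0, by simp⟩
      · exact ⟨1, by simp⟩
  haveI : Fintype ((Fin (n + 1) → ZMod 2) ⧸ p) := Fintype.ofFinite _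
  have hcardQ : Fintype.card ((Fin (n + 1) → ZMod 2) ⧸ p) = 2 ^ n := by
    have h1 : Module.finrank (ZMod 2) (Fin (n + 1) → ZMod 2) = n + 1 := by
      simp [Module.finrank_pi]
    have h2 : Module.finrank (ZMod 2) p = 1 := finrank_span_singleton hs
    have h3 := Submodule.finrank_quotient_add_finrank p
    have h4 : Module.finrank (ZMod 2) ((Fin (n + 1) → ZMod 2) ⧸ p) = n := by omega
    rw [Module.card_eq_pow_finrank (K := ZMod 2), h4, ZMod.card]
  have hcardW : Fintype.card (Fin n → ZMod 2) = 2 ^ n := by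
    simp [ZMod.card]
  set S := {f : (Fin (n + 1) → ZMod 2) → (Fin n → ZMod 2) //
      (∀ y ∈ Set.range f, Nat.card (f ⁻¹' {y}) = 2) ∧ ∀ x, f (x + s) = f x} with hS
  let Φ : (((Fin (n + 1) → ZMod 2) ⧸ p) ≃ (Fin n → ZMod 2)) → S := fun e =>
    ⟨fun x => e (Submodule.Quotient.mk x), by
      constructor
      · intro y _
        obtain ⟨x, hx⟩ := Submodule.Quotient.mk_surjective p (e.symm y)
        have hfib : (fun x => e (Submodule.Quotient.mk x)) ⁻¹' {y} = {x, x + s} := by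
          ext z
          simp only [Set.mem_preimage, Set.mem_singleton_iff, Set.mem_insert_iff]
          constructor
          · intro h
            have : (Submodule.Quotient.mk z : (Fin (n + 1) → ZMod 2) ⧸ p)
                = Submodule.Quotient.mk x := by
              rw [hx]
              exact e.injective (by simp [h])
            exact (hmk z x).mp this
          · rintro (rfl | rfl)
            · rw [hx] at *; simp
            · have : (Submodule.Quotient.mk (x + s) : (Fin (n + 1) → ZMod 2) ⧸ p)
                  = Submodule.Quotient.mk x := (hmk _ _).mpr (Or.inr rfl)
              rw [this, hx]; simp
        rw [hfib, Nat.card_coe_set_eq, Set.ncard_pair (hxs x).symm]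
      · intro x
        have : (Submodule.Quotient.mk (x + s) : (Fin (n + 1) → ZMod 2) ⧸ p)
            = Submodule.Quotient.mk x := (hmk _ _).mpr (Or.inr rfl)
        simp [this]⟩
  have hΦinj : Function.Injective Φ := by
    intro e e' h
    have h' := congrArg Subtype.val h
    apply Equiv.ext
    intro q
    obtain ⟨x, rfl⟩ := Submodule.Quotient.mk_surjective p q
    exact congrFun h' x
  have hΦsurj : Function.Surjective Φ := by
    rintro ⟨f, hf1, hf2⟩
    have hconst : ∀ a b : Fin (n + 1) → ZMod 2,
        (Submodule.Quotient.mk a : (Fin (n + 1) → ZMod 2) ⧸ p) = Submodule.Quotient.mk b →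
          f a = f b := by
      intro a b hab
      rcases (hmk a b).mp hab with rfl | rfl
      · rfl
      · exact hf2 b
    let g : ((Fin (n + 1) → ZMod 2) ⧸ p) → (Fin n → ZMod 2) := fun q =>
      f (Submodule.Quotient.mk_surjective p q).choose
    have hg : ∀ x, g (Submodule.Quotient.mk x) = f x := fun x =>
      hconst _ _ ((Submodule.Quotient.mk_surjective p (Submodule.Quotient.mk x)).choose_spec)
    have hginj : Function.Injective g := by
      intro q1 q2 h
      obtain ⟨x1, rfl⟩ := Submodule.Quotient.mk_surjective p q1
      obtain ⟨x2, rfl⟩ := Submodule.Quotient.mk_surjective p q2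
      rw [hg, hg] at h
      have hy : f x1 ∈ Set.range f := ⟨x1, rfl⟩
      have hcard := hf1 (f x1) hy
      rw [Nat.card_coe_set_eq] at hcard
      have hsub : ({x1, x1 + s} : Set (Fin (n + 1) → ZMod 2)) ⊆ f ⁻¹' {f x1} := by
        rintro z (rfl | rfl)
        · exact rfl
        · exact hf2 x1
      have heq : ({x1, x1 + s} : Set (Fin (n + 1) → ZMod 2)) = f ⁻¹' {f x1} := by
        apply Set.eq_of_subset_of_ncard_le hsub _ (Set.toFinite _)
        rw [hcard, Set.ncard_pair (hxs x1).symm]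
      have hx2 : x2 ∈ ({x1, x1 + s} : Set (Fin (n + 1) → ZMod 2)) := by
        rw [heq]
        exact h.symm
      exact ((hmk x2 x1).mpr (by simpa using hx2)).symm ▸ rfl
    have hgbij : Function.Bijective g :=
      (Fintype.bijective_iff_injective_and_card g).mpr ⟨hginj, by rw [hcardQ, hcardW]⟩
    refine ⟨Equiv.ofBijective g hgbij, ?_⟩
    apply Subtype.ext
    funext x
    simpa [Φ, Equiv.ofBijective] using hg x
  have hcards : Nat.card S = Nat.card (((Fin (n + 1) → ZMod 2) ⧸ p) ≃ (Fin n → ZMod 2)) :=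
    (Nat.card_eq_of_bijective Φ ⟨hΦinj, hΦsurj⟩).symm
  rw [hcards, Nat.card_eq_fintype_card,
    Fintype.card_equiv (Fintype.equivOfCardEq (hcardQ.trans hcardW.symm)), hcardQ]
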